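/- arXiv:1404.7770 — 2 statements merged into one kernel-verified Lean document; each statement's English description precedes it below -/
import Mathlib

section
/- Let G be a finite game structure in which β^0 is the finest coarsening of the players' observations, i.e., β^0(v) = β^0(v') exactly when (v,v') lies in the equivalence relation on V generated by the pairs {(u,u') : β^i(u) = β^i(u') for some player i}. Call a state v a perfect-information state if β^i(v) ≠ β^i(v') for every player i ∈ {1,…,n} and every state v' ≠ v. If every cycle of the directed graph on V with edge set {(v,v') : (v,a,v') ∈ Δ for some a ∈ A} contains a perfect-information state, then G has recurring certainty. -/
/-- The state reached after following the word `w` (a list of (action profile, state) pairs)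
starting from state `v`: the last state of `w`, or `v` if `w` is empty. -/
def endFrom {α V : Type} : V → List (α × V) → V
  | v, [] => v
  | _, p :: w => endFrom p.2 w

/-- An `n`-player game structure with imperfect information: states `V` with an initial state,
action sets `A i` for each player, a total move relation labelled by action profiles,
observation functions `obs i : V → B i` for each player, and the observation function
`obs0 : V → B0` of the fictitious, less informed Player 0. -/
structure GameStructure (n : ℕ) (V : Type) (A : Fin n → Type) (B : Fin n → Type)
    (B0 : Type) where
  init : V
  move : V → (∀ i, A i) → V → Prop
  move_total : ∀ v a, ∃ v', move v a v'
  obs : ∀ i : Fin n, V → B i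
  obs0 : V → B0

namespace GameStructure

variable {n : ℕ} {V : Type} {A : Fin n → Type} {B : Fin n → Type} {B0 : Type}

variable (G : GameStructure n V A B B0)

/-- `G.IsHistFrom v w` holds if the word `w` describes a sequence of legal moves from `v`. -/
def IsHistFrom : V → List ((∀ i, A i) × V) → Prop
  | _, [] => True
  | v, p :: w => G.move v p.1 p.2 ∧ IsHistFrom p.2 w

/-- `w` encodes a history: a legal sequence of moves from the initial state.
The history `v₀ a₀ v₁ … a_{ℓ-1} v_ℓ` is encoded as the word `(a₀,v₁) … (a_{ℓ-1},v_ℓ)`. -/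
def IsHistWord (w : List ((∀ i, A i) × V)) : Prop := G.IsHistFrom G.init w

/-- The final state of the history encoded by `w`. -/
def endState (w : List ((∀ i, A i) × V)) : V := endFrom G.init w

/-- The sequence of Player 0's observations of the states of the history encoded by `w`
(the observation of the initial state is omitted, as it is fixed). Two histories are
`∼⁰`-indistinguishable iff their `obs0Trace`s are equal (which forces equal length). -/
def obs0Trace (w : List ((∀ i, A i) × V)) : List B0 := w.map fun p => G.obs0 p.2

/-- The grand coalition attains certainty at the history `w`: every history
`∼⁰`-indistinguishable from `w` ends at the same state. -/
def Certain (w : List ((∀ i, A i) × V)) : Prop :=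
  ∀ w', G.IsHistWord w' → G.obs0Trace w' = G.obs0Trace w → G.endState w' = G.endState w

/-- A play: an infinite legal sequence of states and action profiles from the initial state. -/
structure Play (G : GameStructure n V A B B0) where
  st : ℕ → V
  act : ℕ → ∀ i, A i
  init_eq : st 0 = G.init
  valid : ∀ k, G.move (st k) (act k) (st (k + 1))

/-- The word encoding the prefix history of length `ℓ` of the play `π`. -/
def Play.prefixWord {G : GameStructure n V A B B0} (π : G.Play) (ℓ : ℕ) :
    List ((∀ i, A i) × V) :=
  (List.range ℓ).map fun k => (π.act k, π.st (k + 1))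

/-- The play `π` has recurring certainty: the grand coalition attains certainty at
infinitely many of its finite prefixes. -/
def Play.HasRecurringCertainty {G : GameStructure n V A B B0} (π : G.Play) : Prop :=
  ∀ m : ℕ, ∃ ℓ, m ≤ ℓ ∧ G.Certain (π.prefixWord ℓ)

/-- The game structure `G` has recurring certainty: every play does. -/
def RecurringCertainty : Prop := ∀ π : G.Play, π.HasRecurringCertainty

/-- `G` has periodic certainty with bound `t`: along every play, every prefix history can be
extended by at most `t` further rounds, within the play, to a history at which the grand
coalition attains certainty. -/
def PeriodicWithBound (t : ℕ) : Prop :=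
  ∀ π : G.Play, ∀ m : ℕ, ∃ ℓ, m ≤ ℓ ∧ ℓ ≤ m + t ∧ G.Certain (π.prefixWord ℓ)

/-- `G` has periodic certainty: periodic certainty with some uniform bound `t`. -/
def PeriodicCertainty : Prop := ∃ t, G.PeriodicWithBound t

end GameStructure

/-- A perfect-information state: every player distinguishes `v` from every other state. -/
def GameStructure.PerfectInfo {n : ℕ} {V : Type} {A : Fin n → Type} {B : Fin n → Type}
    {B0 : Type} (G : GameStructure n V A B B0) (v : V) : Prop :=
  ∀ i : Fin n, ∀ v' : V, v' ≠ v → G.obs i v' ≠ G.obs i v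

/-- The edge relation of the directed graph underlying the game structure. -/
def GameStructure.Edge {n : ℕ} {V : Type} {A : Fin n → Type} {B : Fin n → Type}
    {B0 : Type} (G : GameStructure n V A B B0) (v v' : V) : Prop :=
  ∃ a, G.move v a v'

section Aux

variable {n : ℕ} {V : Type} {A : Fin n → Type} {B : Fin n → Type} {B0 : Type}
variable (G : GameStructure n V A B B0)

lemma aux_obs0_endFrom (v : V) (w : List ((∀ i, A i) × V)) :
    G.obs0 (endFrom v w) = (w.map fun p => G.obs0 p.2).getLastD (G.obs0 v) := by
  induction w generalizing v with
  | nil => rfl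
  | cons p w ih =>
    show G.obs0 (endFrom p.2 w) = _
    rw [List.map_cons, List.getLastD_cons, ih]

lemma aux_eq_of_obs0_eq_perfect {v u : V}
    (hfine : ∀ v v' : V, G.obs0 v = G.obs0 v' ↔
      Relation.EqvGen (fun u u' => ∃ i, G.obs i u = G.obs i u') v v')
    (hp : G.PerfectInfo v) (h : G.obs0 u = G.obs0 v) : u = v := by
  have h' := (hfine u v).mp h
  have key : ∀ a b, Relation.EqvGen (fun u u' => ∃ i, G.obs i u = G.obs i u') a b →
      (a = v ↔ b = v) := by
    intro a b hab
    induction hab with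
    | rel a b hr =>
      constructor
      · rintro rfl
        obtain ⟨i, hi⟩ := hr
        by_contra hb
        exact hp i b hb hi.symm
      · rintro rfl
        obtain ⟨i, hi⟩ := hr
        by_contra ha
        exact hp i a ha hi
    | refl => exact Iff.rfl
    | symm _ _ _ ih => exact ih.symm
    | trans _ _ _ _ _ ih1 ih2 => exact ih1.trans ih2
  exact (key u v h').mpr rfl

lemma aux_certain_of_perfect
    (hfine : ∀ v v' : V, G.obs0 v = G.obs0 v' ↔
      Relation.EqvGen (fun u u' => ∃ i, G.obs i u = G.obs i u') v v')
    (w : List ((∀ i, A i) × V)) (hp : G.PerfectInfo (G.endState w)) :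
    G.Certain w := by
  intro w' _ htr
  apply aux_eq_of_obs0_eq_perfect G hfine hp
  have h1 := aux_obs0_endFrom G G.init w'
  have h2 := aux_obs0_endFrom G G.init w
  have htr' : (w'.map fun p => G.obs0 p.2) = (w.map fun p => G.obs0 p.2) := htr
  unfold GameStructure.endState
  rw [h1, h2, htr']

lemma aux_endFrom_concat {α V : Type} (v : V) (w : List (α × V)) (p : α × V) :
    endFrom v (w ++ [p]) = p.2 := by
  induction w generalizing v with
  | nil => rfl
  | cons q w ih => simpa [endFrom] using ih q.2

lemma aux_prefixWord_succ (π : G.Play) (ℓ : ℕ) :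
    π.prefixWord (ℓ + 1) = π.prefixWord ℓ ++ [(π.act ℓ, π.st (ℓ + 1))] := by
  simp [GameStructure.Play.prefixWord, List.range_succ]

lemma aux_endState_prefixWord (π : G.Play) (ℓ : ℕ) :
    G.endState (π.prefixWord ℓ) = π.st ℓ := by
  cases ℓ with
  | zero =>
    simpa [GameStructure.endState, GameStructure.Play.prefixWord, endFrom] using π.init_eq.symm
  | succ ℓ =>
    rw [aux_prefixWord_succ]
    exact aux_endFrom_concat _ _ _

lemma aux_chain_segment (π : G.Play) : ∀ (d j : ℕ),
    List.Chain G.Edge (π.st j) ((List.range' (j + 1) d).map π.st) := by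
  intro d
  induction d with
  | zero => intro j; simp; exact List.Chain.nil
  | succ d ih =>
    intro j
    rw [List.range'_succ, List.map_cons]
    exact List.Chain.cons ⟨π.act j, π.valid j⟩ (ih (j + 1))

end Aux

/-- If Player 0's observation is the finest coarsening of the players' observations and every
cycle of the underlying directed graph contains a perfect-information state, then the game
structure has recurring certainty. -/
theorem recurringCertainty_of_cycles_through_perfect_information
    {n : ℕ} {V : Type} {A : Fin n → Type} {B : Fin n → Type} {B0 : Type}
    (hn : 1 ≤ n) [Fintype V] [∀ i, Fintype (A i)] [∀ i, Nonempty (A i)]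
    [∀ i, Fintype (B i)] [Fintype B0]
    (G : GameStructure n V A B B0)
    (hfine : ∀ v v' : V, G.obs0 v = G.obs0 v' ↔
      Relation.EqvGen (fun u u' => ∃ i, G.obs i u = G.obs i u') v v')
    (hcycle : ∀ (v : V) (c : List V), c ≠ [] → List.Chain G.Edge v c →
      c.getLast? = some v → ∃ u ∈ c, G.PerfectInfo u) :
    G.RecurringCertainty := by
  intro π m
  -- pigeonhole: two equal states among `π.st m, …, π.st (m + card V)`
  obtain ⟨a, b, hab, hst⟩ : ∃ a b : ℕ, a < b ∧ π.st (m + a) = π.st (m + b) := by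
    obtain ⟨i, j, hne, heq⟩ := Fintype.exists_ne_map_eq_of_card_lt
      (fun i : Fin (Fintype.card V + 1) => π.st (m + i)) (by simp)
    rcases lt_or_gt_of_ne hne with h | h
    · exact ⟨i, j, h, heq⟩
    · exact ⟨j, i, h, heq.symm⟩
  set j : ℕ := m + a with hj
  set k : ℕ := m + b with hk
  have hjk : j < k := by omega
  obtain ⟨e, he⟩ : ∃ e, k - j = e + 1 := ⟨k - j - 1, by omega⟩
  set c : List V := (List.range' (j + 1) (k - j)).map π.st with hc
  have hne : c ≠ [] := by
    rw [hc, he, List.range'_succ]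
    simp
  have hchain : List.Chain G.Edge (π.st j) c := aux_chain_segment G π _ _
  have hlast : c.getLast? = some (π.st j) := by
    rw [hc, he, List.range'_concat, List.map_append]
    have : π.st (j + 1 + e) = π.st j := by
      have : j + 1 + e = k := by omega
      rw [this, hj, hk, hst]
    simp [this]
  obtain ⟨u, hu, hpu⟩ := hcycle (π.st j) c hne hchain hlast
  rw [hc] at hu
  obtain ⟨t, htmem, hut⟩ := List.mem_map.mp hu
  rw [List.mem_range'_1] at htmem
  refine ⟨t, by omega, ?_⟩
  apply aux_certain_of_perfect G hfine
  rw [aux_endState_prefixWord G, hut]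
  exact hpu
end

section
/- Let G be a finite game structure in which β^0 is the finest coarsening of the players' observations, i.e., β^0(v) = β^0(v') exactly when (v,v') lies in the equivalence relation on V generated by the pairs {(u,u') : β^i(u) = β^i(u') for some player i}. If there exists a bound k ∈ ℕ such that every play of G visits, in every window of k consecutive positions, at least one state v with β^i(v) ≠ β^i(v') for every player i and every v' ≠ v (a perfect-information state), then G has periodic certainty with bound k. -/
lemma my_getLastD_map {α β : Type*} (f : α → β) (l : List α) (d : α) :
    (l.map f).getLastD (f d) = f (l.getLastD d) := by
  induction l generalizing d with
  | nil => rfl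
  | cons a l ih => simp only [List.map_cons, List.getLastD_cons]; exact ih a

lemma my_endFrom_eq {α V : Type} (v : V) (w : List (α × V)) :
    endFrom v w = (w.map Prod.snd).getLastD v := by
  induction w generalizing v with
  | nil => rfl
  | cons p w ih => simp only [endFrom, List.map_cons, List.getLastD_cons]; exact ih p.2

lemma my_obs0_endState {n : ℕ} {V : Type} {A : Fin n → Type} {B : Fin n → Type} {B0 : Type}
    (G : GameStructure n V A B B0) (w : List ((∀ i, A i) × V)) :
    G.obs0 (G.endState w) = (G.obs0Trace w).getLastD (G.obs0 G.init) := by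
  rw [GameStructure.endState, my_endFrom_eq, ← my_getLastD_map G.obs0]
  congr 1
  simp [GameStructure.obs0Trace]

lemma my_endState_prefixWord {n : ℕ} {V : Type} {A : Fin n → Type} {B : Fin n → Type}
    {B0 : Type} {G : GameStructure n V A B B0} (π : G.Play) (j : ℕ) :
    G.endState (π.prefixWord j) = π.st j := by
  rw [GameStructure.endState, my_endFrom_eq]
  cases j with
  | zero => simp [GameStructure.Play.prefixWord, π.init_eq]
  | succ m =>
    simp [GameStructure.Play.prefixWord, List.range_succ]

lemma my_eqvGen_perfect {n : ℕ} {V : Type} {A : Fin n → Type} {B : Fin n → Type} {B0 : Type}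
    {G : GameStructure n V A B B0} {v : V} (hv : G.PerfectInfo v) {u : V}
    (h : Relation.EqvGen (fun u u' => ∃ i, G.obs i u = G.obs i u') u v) : u = v := by
  have key : ∀ a b, Relation.EqvGen (fun u u' => ∃ i, G.obs i u = G.obs i u') a b →
      (a = v ↔ b = v) := by
    intro a b hab
    induction hab with
    | rel a b hr =>
      obtain ⟨i, hi⟩ := hr
      constructor
      · rintro rfl
        by_contra hb
        exact hv i b hb hi.symm
      · rintro rfl
        by_contra ha
        exact hv i a ha hi
    | refl a => rfl
    | symm a b _ ih => exact ih.symm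
    | trans a b c _ _ ih1 ih2 => exact ih1.trans ih2
  exact (key u v h).mpr rfl

/-- If Player 0's observation is the finest coarsening of the players' observations and there
is a bound `k` such that every play visits a perfect-information state in every window of `k`
consecutive positions, then the game structure has periodic certainty with bound `k`. -/
theorem periodicWithBound_of_perfect_information_windows
    {n : ℕ} {V : Type} {A : Fin n → Type} {B : Fin n → Type} {B0 : Type}
    (hn : 1 ≤ n) [Fintype V] [∀ i, Fintype (A i)] [∀ i, Nonempty (A i)]
    [∀ i, Fintype (B i)] [Fintype B0]
    (G : GameStructure n V A B B0)
    (hfine : ∀ v v' : V, G.obs0 v = G.obs0 v' ↔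
      Relation.EqvGen (fun u u' => ∃ i, G.obs i u = G.obs i u') v v')
    (k : ℕ)
    (hwin : ∀ π : G.Play, ∀ m : ℕ, ∃ j, m ≤ j ∧ j < m + k ∧ G.PerfectInfo (π.st j)) :
    G.PeriodicWithBound k := by
  intro π m
  obtain ⟨j, hmj, hjk, hpi⟩ := hwin π m
  refine ⟨j, hmj, le_of_lt hjk, ?_⟩
  intro w' _ htr
  have hend := my_endState_prefixWord π j
  have hobs : G.obs0 (G.endState w') = G.obs0 (π.st j) := by
    rw [my_obs0_endState, htr, ← my_obs0_endState, hend]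
  rw [hend]
  exact my_eqvGen_perfect hpi ((hfine _ _).mp hobs)
end
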